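/- Let θ1, θ2, θ3, t, s, H, c be positive real constants and define g : ℝ → ℝ by g(y) = (θ1·exp(−θ2·y) + θ3 + t/s)·(H + c·y). Then g is continuously differentiable on ℝ and g is strictly convex on the interval [2/θ2 − H/c, ∞). -/
import Mathlib


open Real Set

/-- The cost-rate function `g(y) = (θ1·exp(−θ2·y) + θ3 + t/s)·(H + c·y)` is
continuously differentiable on `ℝ` and strictly convex on `[2/θ2 − H/c, ∞)`. -/
theorem cost_rate_strictConvexOn_Ici
    (θ1 θ2 θ3 t s H c : ℝ)
    (hθ1 : 0 < θ1) (hθ2 : 0 < θ2) (hθ3 : 0 < θ3)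
    (ht : 0 < t) (hs : 0 < s) (hH : 0 < H) (hc : 0 < c)
    (g : ℝ → ℝ)
    (hg : ∀ y, g y = (θ1 * Real.exp (-θ2 * y) + θ3 + t / s) * (H + c * y)) :
    ContDiff ℝ 1 g ∧ StrictConvexOn ℝ (Set.Ici (2 / θ2 - H / c)) g := by
  have hgeq : g = fun y => (θ1 * Real.exp (-θ2 * y) + θ3 + t / s) * (H + c * y) :=
    funext hg
  set g1 : ℝ → ℝ := fun y =>
    (θ1 * Real.exp (-θ2 * y) * (-θ2)) * (H + c * y)
      + (θ1 * Real.exp (-θ2 * y) + θ3 + t / s) * c with hg1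
  set g2 : ℝ → ℝ := fun y =>
    θ1 * θ2 * Real.exp (-θ2 * y) * (θ2 * (H + c * y) - 2 * c) with hg2
  have hexp : ∀ y : ℝ, HasDerivAt (fun y => Real.exp (-θ2 * y))
      (Real.exp (-θ2 * y) * (-θ2)) y := by
    intro y
    exact (((hasDerivAt_id y).const_mul (-θ2)).exp).congr_deriv (by simp [id])
  have hd1 : ∀ y : ℝ, HasDerivAt g (g1 y) y := by
    intro y
    rw [hgeq]
    have h1 : HasDerivAt (fun y => θ1 * Real.exp (-θ2 * y) + θ3 + t / s)
        (θ1 * Real.exp (-θ2 * y) * (-θ2)) y := by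
      have := ((hexp y).const_mul θ1).add_const θ3
      have := this.add_const (t / s)
      exact this.congr_deriv (by ring)
    have h2 : HasDerivAt (fun y : ℝ => H + c * y) c y := by
      have := ((hasDerivAt_id y).const_mul c).const_add H
      exact this.congr_deriv (by ring)
    exact (h1.mul h2)
  have hd2 : ∀ y : ℝ, HasDerivAt g1 (g2 y) y := by
    intro y
    have h1 : HasDerivAt (fun y => θ1 * Real.exp (-θ2 * y) * (-θ2))
        (θ1 * Real.exp (-θ2 * y) * (-θ2) * (-θ2)) y := by
      have := ((hexp y).const_mul θ1).mul_const (-θ2)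
      exact this.congr_deriv (by ring)
    have h2 : HasDerivAt (fun y : ℝ => H + c * y) c y := by
      have := ((hasDerivAt_id y).const_mul c).const_add H
      exact this.congr_deriv (by ring)
    have h3 : HasDerivAt (fun y => θ1 * Real.exp (-θ2 * y) + θ3 + t / s)
        (θ1 * Real.exp (-θ2 * y) * (-θ2)) y := by
      have := (((hexp y).const_mul θ1).add_const θ3).add_const (t / s)
      exact this.congr_deriv (by ring)
    have := (h1.mul h2).add (h3.mul_const c)
    exact this.congr_deriv (by ring)
  have hderiv1 : deriv g = g1 := funext fun y => (hd1 y).deriv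
  have hderiv2 : deriv (deriv g) = g2 := by
    rw [hderiv1]; exact funext fun y => (hd2 y).deriv
  constructor
  · rw [hgeq]
    fun_prop
  · apply strictConvexOn_of_deriv2_pos (convex_Ici _)
    · exact fun y _ => (hd1 y).differentiableAt.continuousAt.continuousWithinAt
    · intro x hx
      rw [interior_Ici] at hx
      show 0 < deriv (deriv g) x
      rw [hderiv2]
      have hxe : 0 < Real.exp (-θ2 * x) := Real.exp_pos _
      have hlin : 0 < θ2 * (H + c * x) - 2 * c := by
        have : 2 / θ2 - H / c < x := hx
        have h1 : 2 / θ2 < x + H / c := by linarith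
        have h2 : 2 < θ2 * (x + H / c) := by
          rw [div_lt_iff₀ hθ2] at h1; linarith [h1]
        have h3 : H / c * c = H := div_mul_cancel₀ H hc.ne'
        nlinarith [mul_lt_mul_of_pos_left h2 hc]
      positivity
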